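/- Every finite group acting effectively on the circle S¹ by homeomorphisms is isomorphic to a subgroup of a dihedral group; equivalently, every finite subgroup of Homeo(S¹) is cyclic or dihedral. -/

import Mathlib

open Set

section Comb
variable {n : ℕ}

lemma two_ne_zero_zmod (hn : 3 ≤ n) : (2 : ZMod n) ≠ 0 := by
  haveI : NeZero n := ⟨by omega⟩
  intro h
  have h2 : ((2 : ℕ) : ZMod n) = 0 := by exact_mod_cast h
  rw [ZMod.natCast_eq_zero_iff] at h2
  exact absurd (Nat.le_of_dvd (by norm_num) h2) (by omega)

lemma step_const (hn : 3 ≤ n) (σ : ZMod n → ZMod n) (hinj : Function.Injective σ)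
    (hadj : ∀ k, σ (k + 1) = σ k + 1 ∨ σ (k + 1) = σ k - 1) :
    (∀ k, σ (k + 1) = σ k + 1) ∨ (∀ k, σ (k + 1) = σ k - 1) := by
  have h2 := two_ne_zero_zmod hn
  have key : ∀ k k' : ZMod n, σ (k + 1) = σ k + 1 → σ (k' + 1) = σ k' - 1 → False := by
    intro k k' h1 h1'
    -- propagate: show ∀ m : ℕ, σ (k + m + 1) = σ (k + m) + 1
    have prop : ∀ m : ℕ, σ (k + m + 1) = σ (k + m) + 1 := by
      intro m
      induction m with
      | zero => simpa using h1
      | succ m ih =>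
        rcases hadj (k + m + 1) with h | h
        · push_cast; push_cast at ih ⊢; convert h using 3 <;> ring
        · exfalso
          have : σ (k + m + 1 + 1) = σ (k + m) := by rw [h, ih]; ring
          have := hinj this
          have : (2 : ZMod n) = 0 := by
            have h' : k + (m:ZMod n) + 1 + 1 = k + m := this
            linear_combination h'
          exact h2 this
    -- k' = k + m for some m
    obtain ⟨m, hm⟩ : ∃ m : ℕ, k' = k + m := by
      haveI : NeZero n := ⟨by omega⟩
      refine ⟨(k' - k).val, ?_⟩
      rw [ZMod.natCast_val, ZMod.cast_id]; ring
    rw [hm] at h1'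
    rw [prop m] at h1'
    have : (2 : ZMod n) = 0 := by linear_combination h1'
    exact h2 this
  rcases hadj 0 with h | h
  · left; intro k
    rcases hadj k with h' | h'
    · exact h'
    · exact absurd (key 0 k h h') (by simp)
  · right; intro k
    rcases hadj k with h' | h'
    · exact absurd (key k 0 h' h) (by simp)
    · exact h'

lemma affine_form (hn : 3 ≤ n) (σ : ZMod n → ZMod n) (hinj : Function.Injective σ)
    (hadj : ∀ k, σ (k + 1) = σ k + 1 ∨ σ (k + 1) = σ k - 1) :
    (∃ a, ∀ k, σ k = k + a) ∨ (∃ a, ∀ k, σ k = a - k) := by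
  haveI : NeZero n := ⟨by omega⟩
  rcases step_const hn σ hinj hadj with h | h
  · left
    refine ⟨σ 0, fun k => ?_⟩
    have : ∀ m : ℕ, σ (m : ZMod n) = (m : ZMod n) + σ 0 := by
      intro m
      induction m with
      | zero => simp
      | succ m ih => push_cast [h (m : ZMod n)]; rw [ih]; ring
    have := this k.val
    rwa [ZMod.natCast_val, ZMod.cast_id] at this
  · right
    refine ⟨σ 0, fun k => ?_⟩
    have : ∀ m : ℕ, σ (m : ZMod n) = σ 0 - (m : ZMod n) := by
      intro m
      induction m with
      | zero => simp
      | succ m ih => push_cast [h (m : ZMod n)]; rw [ih]; ring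
    have := this k.val
    rwa [ZMod.natCast_val, ZMod.cast_id] at this

end Comb


section Embed
variable {G : Type} [Group G] {n : ℕ}

lemma not_PQ (hn : 3 ≤ n) {σ : ZMod n → ZMod n} {a b : ZMod n}
    (hP : ∀ k, σ k = k + a) (hQ : ∀ k, σ k = b - k) : False := by
  have h0 := (hP 0).symm.trans (hQ 0)
  have h1 := (hP 1).symm.trans (hQ 1)
  have h2 : (2 : ZMod n) = 0 := by linear_combination h1 - h0
  haveI : NeZero n := ⟨by omega⟩
  have h2' : ((2 : ℕ) : ZMod n) = 0 := by exact_mod_cast h2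
  rw [ZMod.natCast_eq_zero_iff] at h2'
  exact absurd (Nat.le_of_dvd (by norm_num) h2') (by omega)

theorem embed_dihedral (hn : 3 ≤ n) (σ : G → ZMod n → ZMod n)
    (hmul : ∀ g h k, σ (g * h) k = σ g (σ h k))
    (hform : ∀ g, (∃ a, ∀ k, σ g k = k + a) ∨ (∃ a, ∀ k, σ g k = a - k))
    (hfaith : ∀ g, (∀ k, σ g k = k) → g = 1) :
    ∃ Φ : G →* DihedralGroup n, Function.Injective Φ := by
  classical
  have hchar : ∀ g : G, ∃ d : DihedralGroup n,
      (∃ a, (∀ k, σ g k = k + a) ∧ d = DihedralGroup.r (-a)) ∨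
      (∃ a, (∀ k, σ g k = a - k) ∧ d = DihedralGroup.sr a) := by
    intro g
    rcases hform g with ⟨a, ha⟩ | ⟨a, ha⟩
    · exact ⟨DihedralGroup.r (-a), Or.inl ⟨a, ha, rfl⟩⟩
    · exact ⟨DihedralGroup.sr a, Or.inr ⟨a, ha, rfl⟩⟩
  choose f hf using hchar
  have hmap : ∀ g h : G, f (g * h) = f g * f h := by
    intro g h
    rcases hf g with ⟨a, ha, hda⟩ | ⟨a, ha, hda⟩ <;>
      rcases hf h with ⟨b, hb, hdb⟩ | ⟨b, hb, hdb⟩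
    · -- P g a, P h b : σ(gh) k = k + (b + a)
      have hcomp : ∀ k, σ (g * h) k = k + (b + a) := by
        intro k; rw [hmul, hb, ha]; ring
      rcases hf (g * h) with ⟨c, hc, hdc⟩ | ⟨c, hc, hdc⟩
      · have : c = b + a := by have := (hc 0).symm.trans (hcomp 0); simpa using this
        rw [hda, hdb, hdc, this, DihedralGroup.r_mul_r]; congr 1; ring
      · exact absurd (not_PQ hn hcomp hc) not_false
    · -- P g a, Q h b : σ(gh) k = (a + b) - k
      have hcomp : ∀ k, σ (g * h) k = (a + b) - k := by
        intro k; rw [hmul, hb, ha]; ring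
      rcases hf (g * h) with ⟨c, hc, hdc⟩ | ⟨c, hc, hdc⟩
      · exact absurd (not_PQ hn hc hcomp) not_false
      · have : c = a + b := by have := (hc 0).symm.trans (hcomp 0); simpa using this
        rw [hda, hdb, hdc, this, DihedralGroup.r_mul_sr]; congr 1; ring
    · -- Q g a, P h b : σ(gh) k = (a - b) - k
      have hcomp : ∀ k, σ (g * h) k = (a - b) - k := by
        intro k; rw [hmul, hb, ha]; ring
      rcases hf (g * h) with ⟨c, hc, hdc⟩ | ⟨c, hc, hdc⟩
      · exact absurd (not_PQ hn hc hcomp) not_false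
      · have : c = a - b := by have := (hc 0).symm.trans (hcomp 0); simpa using this
        rw [hda, hdb, hdc, this, DihedralGroup.sr_mul_r]; congr 1; ring
    · -- Q g a, Q h b : σ(gh) k = k + (a - b)
      have hcomp : ∀ k, σ (g * h) k = k + (a - b) := by
        intro k; rw [hmul, hb, ha]; ring
      rcases hf (g * h) with ⟨c, hc, hdc⟩ | ⟨c, hc, hdc⟩
      · have : c = a - b := by have := (hc 0).symm.trans (hcomp 0); simpa using this
        rw [hda, hdb, hdc, this, DihedralGroup.sr_mul_sr]; congr 1; ring
      · exact absurd (not_PQ hn hcomp hc) not_false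
  refine ⟨MonoidHom.mk' f hmap, ?_⟩
  rw [injective_iff_map_eq_one]
  intro g hg
  simp only [MonoidHom.mk'_apply] at hg
  rcases hf g with ⟨a, ha, hda⟩ | ⟨a, ha, hda⟩
  · rw [hda] at hg
    have : -a = 0 := by
      have := DihedralGroup.one_def (n := n)
      rw [this] at hg
      exact DihedralGroup.r.inj hg
    have ha0 : a = 0 := by linear_combination -this
    exact hfaith g (fun k => by rw [ha, ha0, add_zero])
  · rw [hda, DihedralGroup.one_def] at hg
    exact absurd hg (by intro h; cases h)

end Embed


/-- partition of an interval by intermediate points -/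
lemma exists_gap : ∀ (n : ℕ) (w : ℕ → ℝ) (r : ℝ), w 0 < r → r < w n →
    (∀ j, j < n → r ≠ w j) → ∃ j < n, w j < r ∧ r < w (j + 1) := by
  intro n
  induction n with
  | zero => intro w r h1 h2 _; exact absurd (h1.trans h2) (lt_irrefl _)
  | succ n ih =>
    intro w r h1 h2 hne
    rcases lt_trichotomy r (w n) with h | h | h
    · obtain ⟨j, hj, hj2⟩ := ih w r h1 h (fun j hj => hne j (by omega))
      exact ⟨j, by omega, hj2⟩
    · exact absurd h (hne n (by omega))
    · exact ⟨n, by omega, h, h2⟩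

/-- a preconnected set inside a finite disjoint union of open sets lies in one of them -/
lemma preconnected_subset_of_disjoint_opens {X : Type*} [TopologicalSpace X] {T : Set X}
    (hT : IsPreconnected T) (hTne : T.Nonempty) {n : ℕ} {U : ℕ → Set X}
    (hUo : ∀ i, i < n → IsOpen (U i))
    (hdisj : ∀ i, i < n → ∀ k, k < n → i ≠ k → U i ∩ U k = ∅)
    (hsub : T ⊆ ⋃ i ∈ Finset.range n, U i) : ∃ i < n, T ⊆ U i := by
  obtain ⟨z, hz⟩ := hTne
  obtain ⟨i, hi, hzi⟩ : ∃ i, i < n ∧ z ∈ U i := by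
    have := hsub hz
    simp only [mem_iUnion, Finset.mem_range] at this
    obtain ⟨i, hi, h⟩ := this; exact ⟨i, hi, h⟩
  refine ⟨i, hi, ?_⟩
  have hv : IsOpen (⋃ k ∈ (Finset.range n).erase i, U k) :=
    isOpen_biUnion (fun k hk => hUo k (Finset.mem_range.1 (Finset.mem_of_mem_erase hk)))
  refine IsPreconnected.subset_left_of_subset_union (hUo i hi) hv ?_ ?_ ⟨z, hz, hzi⟩ hT
  · rw [Set.disjoint_left]
    intro x hx hx'
    simp only [mem_iUnion] at hx'
    obtain ⟨k, hk, hxk⟩ := hx'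
    have hki : k ≠ i := Finset.ne_of_mem_erase hk
    have hkn : k < n := Finset.mem_range.1 (Finset.mem_of_mem_erase hk)
    have h0 := hdisj i hi k hkn (Ne.symm hki)
    have : x ∈ U i ∩ U k := ⟨hx, hxk⟩
    rw [h0] at this
    exact this
  · intro x hx
    have := hsub hx
    simp only [mem_iUnion, Finset.mem_range] at this
    obtain ⟨k, hk, hxk⟩ := this
    by_cases hki : k = i
    · exact Or.inl (hki ▸ hxk)
    · exact Or.inr (mem_biUnion (Finset.mem_erase.2 ⟨hki, Finset.mem_range.2 hk⟩) hxk)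


theorem circle_case (G : Type) [Group G] [Finite G]
    (Ψ : G → (AddCircle (1:ℝ) ≃ₜ AddCircle (1:ℝ)))
    (hΨmul : ∀ g h x, Ψ (g * h) x = Ψ g (Ψ h x))
    (hΨone : ∀ x, Ψ 1 x = x)
    (hΨex : ∀ g, g ≠ 1 → ∃ x, Ψ g x ≠ x) :
    ∃ (m : ℕ) (H : Subgroup (DihedralGroup m)), Nonempty (G ≃* H) := by
  classical
  haveI : Fact ((0:ℝ) < 1) := ⟨one_pos⟩
  -- moved points
  have hx : ∀ g : G, ∃ x : AddCircle (1:ℝ), g ≠ 1 → Ψ g x ≠ x := by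
    intro g
    by_cases hg : g = 1
    · exact ⟨0, fun h => absurd hg h⟩
    · obtain ⟨x, hx⟩ := hΨex g hg; exact ⟨x, fun _ => hx⟩
  choose xp hxp using hx
  -- three marked points
  set y : Fin 3 → AddCircle (1:ℝ) := fun i => (((i : ℕ) : ℝ)/3 : ℝ) with hy_def
  have hymem : ∀ i : Fin 3, ((i : ℕ) : ℝ)/3 ∈ Ico (0:ℝ) (0+1) := by
    intro i
    have h3 : ((i : ℕ) : ℝ) < 3 := by exact_mod_cast i.isLt
    constructor
    · positivity
    · rw [zero_add]; linarith
  have hy_inj : Function.Injective y := by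
    intro i j hij
    have := (AddCircle.coe_eq_coe_iff_of_mem_Ico (hymem i) (hymem j)).1 hij
    have h2 : ((i : ℕ) : ℝ) = ((j : ℕ) : ℝ) := by linarith [this]
    exact Fin.ext (by exact_mod_cast h2)
  -- the invariant finite set
  set B : Set (AddCircle (1:ℝ)) := range xp ∪ range y with hB_def
  set SS : Set (AddCircle (1:ℝ)) := ⋃ g : G, (Ψ g) '' B with hSS_def
  have hS_fin : SS.Finite :=
    Set.finite_iUnion (fun g => ((Set.finite_range xp).union (Set.finite_range y)).image _)
  have hB_sub : B ⊆ SS := by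
    intro z hz
    exact mem_iUnion.2 ⟨1, ⟨z, hz, hΨone z⟩⟩
  have hS_mapsto : ∀ g z, z ∈ SS → Ψ g z ∈ SS := by
    intro g z hz
    obtain ⟨h, hz'⟩ := mem_iUnion.1 hz
    obtain ⟨b, hb, rfl⟩ := hz'
    exact mem_iUnion.2 ⟨g * h, ⟨b, hb, hΨmul g h b⟩⟩
  have hΨinv : ∀ (g : G) (z : AddCircle (1:ℝ)), Ψ g ((Ψ g⁻¹) z) = z := by
    intro g z
    rw [← hΨmul, mul_inv_cancel, hΨone]
  -- the finset and enumeration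
  set S' : Finset (AddCircle (1:ℝ)) := hS_fin.toFinset with hS'_def
  set n : ℕ := S'.card with hn_def
  set rep0 : AddCircle (1:ℝ) → ℝ := fun z => ((AddCircle.equivIco 1 0 z : ℝ)) with hrep0_def
  have hrep0_mem : ∀ z, rep0 z ∈ Ico (0:ℝ) (0+1) := fun z => (AddCircle.equivIco 1 0 z).2
  have hrep0_coe : ∀ z, ((rep0 z : ℝ) : AddCircle (1:ℝ)) = z := by
    intro z
    exact (AddCircle.equivIco 1 0).symm_apply_apply z
  have hrep0_inj : Function.Injective rep0 := by
    intro u v huv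
    have := congrArg (fun r : ℝ => ((r : ℝ) : AddCircle (1:ℝ))) huv
    simpa [hrep0_coe] using this
  set F : Finset ℝ := S'.image rep0 with hF_def
  have hcardF : F.card = n := Finset.card_image_of_injective _ hrep0_inj
  set t : Fin n ↪o ℝ := F.orderEmbOfFin hcardF with ht_def
  have ht_mem : ∀ j, t j ∈ F := fun j => Finset.orderEmbOfFin_mem F hcardF j
  have ht_Ico : ∀ j, t j ∈ Ico (0:ℝ) 1 := by
    intro j
    obtain ⟨z, _, hz⟩ := Finset.mem_image.1 (ht_mem j)
    rw [← hz]
    simpa using hrep0_mem z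
  -- n ≥ 3
  have hymemS : ∀ i, y i ∈ S' := fun i => hS_fin.mem_toFinset.2 (hB_sub (Or.inr ⟨i, rfl⟩))
  have hn3 : 3 ≤ n := by
    have hsub : ({y 0, y 1, y 2} : Finset (AddCircle (1:ℝ))) ⊆ S' := by
      intro z hz
      simp only [Finset.mem_insert, Finset.mem_singleton] at hz
      rcases hz with rfl | rfl | rfl <;> exact hymemS _
    have hc : ({y 0, y 1, y 2} : Finset (AddCircle (1:ℝ))).card = 3 := by
      rw [Finset.card_insert_of_notMem, Finset.card_insert_of_notMem, Finset.card_singleton]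
      · simp only [Finset.mem_singleton]
        intro h; exact absurd (hy_inj h) (by decide)
      · simp only [Finset.mem_insert, Finset.mem_singleton]
        rintro (h | h) <;> exact absurd (hy_inj h) (by decide)
    calc 3 = ({y 0, y 1, y 2} : Finset (AddCircle (1:ℝ))).card := hc.symm
    _ ≤ n := Finset.card_le_card hsub
  have hn0 : 0 < n := by omega
  -- the cyclically-ordered enumeration, extended by one period
  set w : ℕ → ℝ := fun j => if h : j < n then t ⟨j, h⟩ else t ⟨0, hn0⟩ + 1 with hw_def
  have hw_lt : ∀ j (h : j < n), w j = t ⟨j, h⟩ := by intro j h; simp [hw_def, h]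
  have hw_n : w n = w 0 + 1 := by simp [hw_def, hn0, lt_irrefl]
  have hw_mono : ∀ j k, j < k → k ≤ n → w j < w k := by
    intro j k hjk hk
    have hj : j < n := by omega
    rcases lt_or_eq_of_le hk with h | rfl
    · rw [hw_lt j hj, hw_lt k h]
      exact t.strictMono (show (⟨j, hj⟩ : Fin n) < ⟨k, h⟩ from hjk)
    · rw [hw_lt j hj, hw_n, hw_lt 0 hn0]
      have h1 := (ht_Ico ⟨j, hj⟩).2
      have h2 := (ht_Ico ⟨0, hn0⟩).1
      linarith
  have hw_le : ∀ j k, j ≤ k → k ≤ n → w j ≤ w k := by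
    intro j k hjk hk
    rcases lt_or_eq_of_le hjk with h | rfl
    · exact (hw_mono j k h hk).le
    · exact le_refl _
  have hw_inj : ∀ j k, j ≤ n → k ≤ n → w j = w k → j = k := by
    intro j k hj hk h
    rcases lt_trichotomy j k with hlt | he | hgt
    · exact absurd h (ne_of_lt (hw_mono j k hlt hk))
    · exact he
    · exact absurd h.symm (ne_of_lt (hw_mono k j hgt hj))
  have hw_reflect : ∀ j k, j ≤ n → k ≤ n → w j < w k → j < k := by
    intro j k hj hk h
    by_contra hc
    push_neg at hc
    exact absurd h (not_lt.2 (hw_le k j hc hj))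
  have hw_mem : ∀ j, j ≤ n → w j ∈ Icc (w 0) (w 0 + 1) := by
    intro j hj
    constructor
    · exact hw_le 0 j (Nat.zero_le _) hj
    · rw [← hw_n]; exact hw_le j n hj (le_refl _)
  -- the points on the circle
  set s : ℕ → AddCircle (1:ℝ) := fun j => ((w j : ℝ) : AddCircle (1:ℝ)) with hs_def
  have hs_n : s n = s 0 := by
    show ((w n : ℝ) : AddCircle (1:ℝ)) = ((w 0 : ℝ) : AddCircle (1:ℝ))
    rw [hw_n]
    exact AddCircle.coe_add_period 1 (w 0)
  -- representative based at w 0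
  set rep : AddCircle (1:ℝ) → ℝ := fun z => ((AddCircle.equivIco 1 (w 0) z : ℝ)) with hrep_def
  have hrep_mem : ∀ z, rep z ∈ Ico (w 0) (w 0 + 1) := fun z => (AddCircle.equivIco 1 (w 0) z).2
  have hrep_coe : ∀ z, ((rep z : ℝ) : AddCircle (1:ℝ)) = z := by
    intro z
    exact (AddCircle.equivIco 1 (w 0)).symm_apply_apply z
  have hrep_eq : ∀ u : ℝ, u ∈ Ico (w 0) (w 0 + 1) → rep ((u : ℝ) : AddCircle (1:ℝ)) = u := by
    intro u hu
    have h1 : AddCircle.equivIco 1 (w 0) ((u : ℝ) : AddCircle (1:ℝ))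
        = ⟨toIcoMod (zero_lt_one) (w 0) u, toIcoMod_mem_Ico _ _ _⟩ :=
      QuotientAddGroup.equivIcoMod_coe _ _ _
    show ((AddCircle.equivIco 1 (w 0) ((u : ℝ) : AddCircle (1:ℝ))) : ℝ) = u
    rw [h1]
    exact (toIcoMod_eq_self zero_lt_one).2 hu
  have hrep_s : ∀ j, j < n → rep (s j) = w j := by
    intro j hj
    refine hrep_eq _ ⟨(hw_mem j hj.le).1, ?_⟩
    rw [← hw_n]
    exact hw_mono j n hj (le_refl _)
  -- characterization of SS
  have hS_char : ∀ z, z ∈ SS ↔ ∃ j, j < n ∧ z = s j := by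
    intro z
    constructor
    · intro hz
      have hz' : z ∈ S' := hS_fin.mem_toFinset.2 hz
      have hmem : rep0 z ∈ F := Finset.mem_image_of_mem rep0 hz'
      have hmem' : rep0 z ∈ Set.range fun i => t i := by
        rw [ht_def, Finset.range_orderEmbOfFin]
        exact_mod_cast hmem
      obtain ⟨j, hj⟩ := hmem'
      refine ⟨j.val, j.isLt, ?_⟩
      have hwj : w j.val = rep0 z := by rw [hw_lt j.val j.isLt, Fin.eta]; exact hj
      conv_lhs => rw [← hrep0_coe z]
      show ((rep0 z : ℝ) : AddCircle (1:ℝ)) = ((w j.val : ℝ) : AddCircle (1:ℝ))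
      rw [hwj]
    · rintro ⟨j, hj, rfl⟩
      have : w j ∈ F := by rw [hw_lt j hj]; exact ht_mem ⟨j, hj⟩
      obtain ⟨z', hz', hz'2⟩ := Finset.mem_image.1 this
      have heq : s j = z' := by
        show ((w j : ℝ) : AddCircle (1:ℝ)) = z'
        rw [← hz'2]
        exact hrep0_coe z'
      rw [heq]
      exact hS_fin.mem_toFinset.1 hz'
  -- the open arcs
  have hcont_coe : Continuous ((↑) : ℝ → AddCircle (1:ℝ)) := AddCircle.continuous_mk' 1
  have hopen_coe : IsOpenMap ((↑) : ℝ → AddCircle (1:ℝ)) := QuotientAddGroup.isOpenMap_coe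
  set V : ℕ → Set (AddCircle (1:ℝ)) := fun j => ((↑) : ℝ → AddCircle (1:ℝ)) '' Ioo (w j) (w (j+1))
    with hV_def
  have hV_open : ∀ j, IsOpen (V j) := fun j => hopen_coe _ isOpen_Ioo
  have hV_conn : ∀ j, IsPreconnected (V j) :=
    fun j => isPreconnected_Ioo.image _ hcont_coe.continuousOn
  have hV_ne : ∀ j, j < n → (V j).Nonempty := by
    intro j hj
    have h1 : w j < w (j+1) := hw_mono j (j+1) (by omega) (by omega)
    exact ⟨_, ⟨(w j + w (j+1))/2, ⟨by linarith, by linarith⟩, rfl⟩⟩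
  have hV_memrep : ∀ j, j < n → ∀ z, z ∈ V j ↔ rep z ∈ Ioo (w j) (w (j+1)) := by
    intro j hj z
    constructor
    · rintro ⟨u, hu, rfl⟩
      have hu' : u ∈ Ico (w 0) (w 0 + 1) := by
        constructor
        · exact le_trans (hw_mem j hj.le).1 hu.1.le
        · exact lt_of_lt_of_le hu.2 (by rw [← hw_n]; exact hw_le (j+1) n (by omega) (le_refl _))
      rw [hrep_eq u hu']
      exact hu
    · intro hrep'
      exact ⟨rep z, hrep', hrep_coe z⟩
  have hV_disj : ∀ i, i < n → ∀ k, k < n → i ≠ k → V i ∩ V k = ∅ := by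
    intro i hi k hk hik
    rw [eq_empty_iff_forall_notMem]
    rintro z ⟨h1, h2⟩
    rw [hV_memrep i hi z] at h1
    rw [hV_memrep k hk z] at h2
    rcases lt_or_gt_of_ne hik with h | h
    · have : w (i+1) ≤ w k := hw_le (i+1) k (by omega) hk.le
      linarith [h1.2, h2.1]
    · have : w (k+1) ≤ w i := hw_le (k+1) i (by omega) hi.le
      linarith [h1.1, h2.2]
  have hS_notin_V : ∀ j, j < n → ∀ z ∈ SS, z ∉ V j := by
    intro j hj z hz hzV
    obtain ⟨i, hi, rfl⟩ := (hS_char z).1 hz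
    rw [hV_memrep j hj _, hrep_s i hi] at hzV
    have h1 : j < i := hw_reflect j i hj.le hi.le hzV.1
    have h2 : i < j + 1 := hw_reflect i (j+1) hi.le (by omega) hzV.2
    omega
  have hcover : ∀ z, z ∉ SS → ∃ j, j < n ∧ z ∈ V j := by
    intro z hz
    have hne : ∀ j, j < n → rep z ≠ w j := by
      intro j hj h
      apply hz
      rw [hS_char]
      exact ⟨j, hj, by rw [← hrep_coe z, h]⟩
    have h1 : w 0 < rep z := lt_of_le_of_ne (hrep_mem z).1 (Ne.symm (hne 0 hn0))
    have h2 : rep z < w n := by rw [hw_n]; exact (hrep_mem z).2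
    obtain ⟨j, hj, hj2⟩ := exists_gap n w (rep z) h1 h2 hne
    exact ⟨j, hj, (hV_memrep j hj z).2 hj2⟩
  -- closures of arcs
  have hclos : ∀ j, j < n →
      closure (V j) = ((↑) : ℝ → AddCircle (1:ℝ)) '' Icc (w j) (w (j+1)) := by
    intro j hj
    have hcomp : IsCompact (((↑) : ℝ → AddCircle (1:ℝ)) '' Icc (w j) (w (j+1))) :=
      isCompact_Icc.image hcont_coe
    refine Subset.antisymm (closure_minimal (image_mono Ioo_subset_Icc_self) hcomp.isClosed) ?_
    rw [← closure_Ioo (ne_of_lt (hw_mono j (j+1) (by omega) (by omega)))]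
    exact image_closure_subset_closure_image hcont_coe
  have hsSS : ∀ j, j ≤ n → s j ∈ SS := by
    intro j hj
    rcases lt_or_eq_of_le hj with h | rfl
    · exact (hS_char (s j)).2 ⟨j, h, rfl⟩
    · rw [hs_n]; exact (hS_char (s 0)).2 ⟨0, hn0, rfl⟩
  have hclosS : ∀ j, j < n → ∀ z ∈ SS, z ∈ closure (V j) → z = s j ∨ z = s (j+1) := by
    intro j hj z hz hzc
    rw [hclos j hj] at hzc
    obtain ⟨u, hu, rfl⟩ := hzc
    obtain ⟨i, hi, hzi⟩ := (hS_char _).1 hz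
    -- (u : AddCircle) = (w i : AddCircle), extract the integer
    have hsub : u - w i ∈ AddSubgroup.zmultiples (1:ℝ) := by
      rw [← QuotientAddGroup.eq_iff_sub_mem]
      exact hzi
    obtain ⟨m, hm⟩ := AddSubgroup.mem_zmultiples_iff.1 hsub
    have hm' : (m : ℝ) = u - w i := by rw [← hm]; simp
    have hu1 : w 0 ≤ u := le_trans (hw_mem j hj.le).1 hu.1
    have hu2 : u ≤ w 0 + 1 := le_trans hu.2 (by rw [← hw_n]; exact hw_le (j+1) n (by omega) (le_refl _))
    have hwi1 : w 0 ≤ w i := (hw_mem i hi.le).1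
    have hwi2 : w i < w 0 + 1 := by rw [← hw_n]; exact hw_mono i n hi (le_refl _)
    have hmbound : (-1 : ℝ) < (m : ℝ) ∧ (m : ℝ) ≤ 1 := by
      constructor <;> [linarith [hm']; linarith [hm']]
    have hm01 : m = 0 ∨ m = 1 := by
      have hb1 : (-1 : ℤ) < m := by exact_mod_cast hmbound.1
      have hb2 : m ≤ (1 : ℤ) := by exact_mod_cast hmbound.2
      omega
    rcases hm01 with rfl | rfl
    · -- u = w i
      have huwi : u = w i := by push_cast at hm'; linarith
      have hji : j ≤ i := by
        by_contra hc
        push_neg at hc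
        have hlt : w i < w j := hw_mono i j hc hj.le
        rw [← huwi] at hlt
        linarith [hu.1]
      have hij1 : i ≤ j + 1 := by
        by_contra hc
        push_neg at hc
        have : w (j+1) < w i := hw_mono (j+1) i hc hi.le
        rw [← huwi] at this
        linarith [hu.2]
      rcases (by omega : i = j ∨ i = j + 1) with rfl | rfl
      · left; rw [hzi]
      · right; rw [hzi]
    · -- u = w i + 1, forces i = 0 and j + 1 = n
      have huwi : u = w i + 1 := by push_cast at hm'; linarith
      have hueq : u = w 0 + 1 := by linarith
      have hwi0 : w i = w 0 := by linarith
      have hi0 : i = 0 := hw_inj i 0 hi.le (by omega) hwi0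
      have hwj1 : w (j+1) = w 0 + 1 := le_antisymm
        (by rw [← hw_n]; exact hw_le (j+1) n (by omega) (le_refl _))
        (by rw [← hueq]; exact hu.2)
      have hjn : j + 1 = n := hw_inj (j+1) n (by omega) (le_refl _) (by rw [hwj1, hw_n])
      right
      rw [hzi, hi0, hjn, hs_n]
  have hend_mem : ∀ j, j < n → s j ∈ closure (V j) ∧ s (j+1) ∈ closure (V j) := by
    intro j hj
    rw [hclos j hj]
    constructor
    · exact ⟨w j, ⟨le_refl _, (hw_mono j (j+1) (by omega) (by omega)).le⟩, rfl⟩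
    · exact ⟨w (j+1), ⟨(hw_mono j (j+1) (by omega) (by omega)).le, le_refl _⟩, rfl⟩
  have hs_ne_succ : ∀ j, j < n → s j ≠ s (j+1) := by
    intro j hj heq
    by_cases h : j + 1 < n
    · have := congrArg rep heq
      rw [hrep_s j hj, hrep_s (j+1) h] at this
      exact absurd this (ne_of_lt (hw_mono j (j+1) (by omega) (by omega)))
    · have hjn : j + 1 = n := by omega
      rw [hjn, hs_n] at heq
      have := congrArg rep heq
      rw [hrep_s j hj, hrep_s 0 hn0] at this
      have := hw_inj j 0 hj.le (by omega) this
      omega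
  -- the key geometric step
  have main : ∀ (g : G) (j), j < n → ∃ i, i < n ∧
      ((Ψ g (s j) = s i ∧ Ψ g (s (j+1)) = s (i+1)) ∨
       (Ψ g (s j) = s (i+1) ∧ Ψ g (s (j+1)) = s i)) := by
    intro g j hj
    have havoid : ∀ z ∈ V j, Ψ g z ∉ SS := by
      intro z hz hmem
      have : z ∈ SS := by
        have h2 := hS_mapsto g⁻¹ _ hmem
        rw [← hΨmul, inv_mul_cancel, hΨone] at h2
        exact h2
      exact hS_notin_V j hj z this hz
    have havoid' : ∀ z ∈ V j, ∃ i, i < n ∧ Ψ g z ∈ V i := by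
      intro z hz
      obtain ⟨i, hi, h⟩ := hcover _ (havoid z hz)
      exact ⟨i, hi, h⟩
    -- the image of the arc is contained in a unique arc
    obtain ⟨i, hi, hsub⟩ := preconnected_subset_of_disjoint_opens
      ((hV_conn j).image _ (Ψ g).continuous.continuousOn)
      ((hV_ne j hj).image _) (fun i _ => hV_open i) hV_disj
      (by
        rintro z ⟨u, hu, rfl⟩
        obtain ⟨i, hi, h⟩ := havoid' u hu
        exact mem_biUnion (Finset.mem_range.2 hi) h)
    -- the inverse image of arc i is contained in a unique arc
    have havoid2 : ∀ z ∈ V i, (Ψ g).symm z ∉ SS := by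
      intro z hz hmem
      have h2 := hS_mapsto g _ hmem
      rw [Homeomorph.apply_symm_apply] at h2
      exact hS_notin_V i hi z h2 hz
    obtain ⟨i', hi', hsub'⟩ := preconnected_subset_of_disjoint_opens
      ((hV_conn i).image _ (Ψ g).symm.continuous.continuousOn)
      ((hV_ne i hi).image _) (fun k _ => hV_open k) hV_disj
      (by
        rintro z ⟨u, hu, rfl⟩
        obtain ⟨k, hk, h⟩ := hcover _ (havoid2 u hu)
        exact mem_biUnion (Finset.mem_range.2 hk) h)
    have hVjsub : V j ⊆ V i' := by
      intro z hz
      have : Ψ g z ∈ V i := hsub ⟨z, hz, rfl⟩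
      have h2 : (Ψ g).symm (Ψ g z) ∈ V i' := hsub' ⟨Ψ g z, this, rfl⟩
      rwa [Homeomorph.symm_apply_apply] at h2
    have hii' : i' = j := by
      by_contra hc
      obtain ⟨z, hz⟩ := hV_ne j hj
      have : z ∈ V i' ∩ V j := ⟨hVjsub hz, hz⟩
      rw [hV_disj i' hi' j hj (Ne.symm (fun h => hc h.symm))] at this
      exact this
    subst hii'
    have himg : Ψ g '' V i' = V i := by
      refine Subset.antisymm hsub ?_
      intro z hz
      have h2 : (Ψ g).symm z ∈ V i' := hsub' ⟨z, hz, rfl⟩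
      exact ⟨(Ψ g).symm z, h2, Homeomorph.apply_symm_apply _ _⟩
    -- endpoints
    have hcl : Ψ g '' closure (V i') = closure (V i) := by
      rw [Homeomorph.image_closure, himg]
    have hj1 : Ψ g (s i') ∈ closure (V i) := by
      rw [← hcl]; exact ⟨s i', (hend_mem i' hj).1, rfl⟩
    have hj2 : Ψ g (s (i'+1)) ∈ closure (V i) := by
      rw [← hcl]; exact ⟨s (i'+1), (hend_mem i' hj).2, rfl⟩
    have hm1 : Ψ g (s i') ∈ SS := hS_mapsto g _ (hsSS i' hj.le)
    have hm2 : Ψ g (s (i'+1)) ∈ SS := hS_mapsto g _ (hsSS (i'+1) (by omega))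
    have hc1 := hclosS i hi _ hm1 hj1
    have hc2 := hclosS i hi _ hm2 hj2
    have hne12 : Ψ g (s i') ≠ Ψ g (s (i'+1)) :=
      fun h => hs_ne_succ i' hj ((Ψ g).injective h)
    refine ⟨i, hi, ?_⟩
    rcases hc1 with h1 | h1 <;> rcases hc2 with h2 | h2
    · exact absurd (h1.trans h2.symm) hne12
    · exact Or.inl ⟨h1, h2⟩
    · exact Or.inr ⟨h1, h2⟩
    · exact absurd (h1.trans h2.symm) hne12
  -- transfer to ZMod n
  haveI : NeZero n := ⟨by omega⟩
  set q : ZMod n → AddCircle (1:ℝ) := fun k => s k.val with hq_def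
  have hq_succ : ∀ k : ZMod n, q (k + 1) = s (k.val + 1) := by
    intro k
    have h1 : (k + 1 : ZMod n) = ((k.val + 1 : ℕ) : ZMod n) := by
      push_cast
      rw [ZMod.natCast_val, ZMod.cast_id]
    rw [h1]
    show s (((k.val + 1 : ℕ) : ZMod n)).val = s (k.val + 1)
    rw [ZMod.val_natCast]
    by_cases h : k.val + 1 < n
    · rw [Nat.mod_eq_of_lt h]
    · have hkn : k.val < n := ZMod.val_lt k
      have : k.val + 1 = n := by omega
      rw [this, Nat.mod_self, ← this]
      rw [show s (k.val + 1) = s n from by rw [this]]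
      exact hs_n.symm
  have hq_inj : Function.Injective q := by
    intro k k' hkk
    have h1 : rep (s k.val) = w k.val := hrep_s _ (ZMod.val_lt k)
    have h2 : rep (s k'.val) = w k'.val := hrep_s _ (ZMod.val_lt k')
    have : w k.val = w k'.val := by
      rw [← h1, ← h2]
      exact congrArg rep hkk
    have hval := hw_inj _ _ (ZMod.val_lt k).le (ZMod.val_lt k').le this
    have := congrArg (Nat.cast : ℕ → ZMod n) hval
    simpa [ZMod.natCast_val, ZMod.cast_id] using this
  have hq_mem : ∀ k, q k ∈ SS := fun k => (hS_char _).2 ⟨k.val, ZMod.val_lt k, rfl⟩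
  have hq_surj : ∀ z ∈ SS, ∃ k, q k = z := by
    intro z hz
    obtain ⟨j, hj, rfl⟩ := (hS_char z).1 hz
    refine ⟨(j : ZMod n), ?_⟩
    show s ((j : ZMod n)).val = s j
    rw [ZMod.val_natCast, Nat.mod_eq_of_lt hj]
  have hσ_ex : ∀ (g : G) (k : ZMod n), ∃ k', q k' = Ψ g (q k) :=
    fun g k => hq_surj _ (hS_mapsto g _ (hq_mem k))
  choose σ hσ using hσ_ex
  have hσ_mul : ∀ g h k, σ (g * h) k = σ g (σ h k) := by
    intro g h k
    apply hq_inj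
    rw [hσ, hσ, hΨmul, ← hσ]
  have hσ_inj : ∀ g, Function.Injective (σ g) := by
    intro g k k' hkk
    apply hq_inj
    have := congrArg q hkk
    rw [hσ, hσ] at this
    exact (Ψ g).injective this
  have hσ_adj : ∀ g (k : ZMod n), σ g (k + 1) = σ g k + 1 ∨ σ g (k + 1) = σ g k - 1 := by
    intro g k
    obtain ⟨i, hi, hcase⟩ := main g k.val (ZMod.val_lt k)
    set κ : ZMod n := (i : ZMod n) with hκ_def
    have hκval : κ.val = i := by rw [hκ_def, ZMod.val_natCast, Nat.mod_eq_of_lt hi]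
    have hqκ : q κ = s i := by rw [hq_def]; show s κ.val = s i; rw [hκval]
    have hqκ1 : q (κ + 1) = s (i + 1) := by rw [hq_succ, hκval]
    have hqk : q k = s k.val := rfl
    have hqk1 : q (k + 1) = s (k.val + 1) := hq_succ k
    rcases hcase with ⟨h1, h2⟩ | ⟨h1, h2⟩
    · left
      have e1 : σ g k = κ := hq_inj (by rw [hσ, hqk, h1, hqκ])
      have e2 : σ g (k + 1) = κ + 1 := hq_inj (by rw [hσ, hqk1, h2, hqκ1])
      rw [e1, e2]
    · right
      have e1 : σ g k = κ + 1 := hq_inj (by rw [hσ, hqk, h1, hqκ1])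
      have e2 : σ g (k + 1) = κ := hq_inj (by rw [hσ, hqk1, h2, hqκ])
      rw [e1, e2]
      ring
  have hσ_faith : ∀ g, (∀ k, σ g k = k) → g = 1 := by
    intro g hgk
    by_contra hg
    have hxpS : xp g ∈ SS := hB_sub (Or.inl ⟨g, rfl⟩)
    obtain ⟨k, hk⟩ := hq_surj _ hxpS
    have : Ψ g (q k) = q k := by
      rw [← hσ, hgk]
    rw [hk] at this
    exact hxp g hg this
  obtain ⟨Φ, hΦ⟩ := embed_dihedral hn3 σ hσ_mul
    (fun g => affine_form hn3 (σ g) (hσ_inj g) (hσ_adj g)) hσ_faith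
  exact ⟨n, Φ.range, ⟨MonoidHom.ofInjective hΦ⟩⟩

/-- Every finite group acting effectively on the circle `S¹` by homeomorphisms is
isomorphic to a subgroup of a dihedral group (equivalently, every finite subgroup
of `Homeo(S¹)` is cyclic or dihedral).  The action by homeomorphisms is encoded as
an injective homomorphism to `Equiv.Perm Circle` with continuous values and
inverses. -/
theorem finite_group_acting_on_circle_subgroup_of_dihedral
    (G : Type) [Group G] [Finite G] (φ : G →* Equiv.Perm Circle)
    (hcont : ∀ g : G, Continuous (φ g))
    (hcont' : ∀ g : G, Continuous ((φ g).symm))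
    (hinj : Function.Injective φ) :
    ∃ (m : ℕ) (H : Subgroup (DihedralGroup m)), Nonempty (G ≃* H) := by
  classical
  set e : AddCircle (1:ℝ) ≃ₜ Circle := AddCircle.homeomorphCircle one_ne_zero with he
  set Ψ : G → (AddCircle (1:ℝ) ≃ₜ AddCircle (1:ℝ)) :=
    fun g => (e.trans (Homeomorph.mk (φ g) (hcont g) (hcont' g))).trans e.symm with hΨ
  have hΨ_apply : ∀ g x, Ψ g x = e.symm (φ g (e x)) := by
    intro g x
    simp [hΨ, Homeomorph.trans_apply]
  apply circle_case G Ψ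
  · intro g h x
    rw [hΨ_apply, hΨ_apply, hΨ_apply, map_mul, Equiv.Perm.mul_apply, e.apply_symm_apply]
  · intro x
    rw [hΨ_apply, map_one, Equiv.Perm.one_apply, e.symm_apply_apply]
  · intro g hg
    by_contra hno
    push_neg at hno
    apply hg
    apply hinj
    rw [map_one]
    ext y
    have hy := hno (e.symm y)
    rw [hΨ_apply, e.apply_symm_apply] at hy
    have := e.symm.injective hy
    simp [this]
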